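/- Let L ≥ 1, m_ℓ ≥ 1 for ℓ ∈ [L], M := ∑_ℓ m_ℓ, U > 0, ε > 0, and let T be the ⌈2/ε⌉-th largest value of the multiset {U·m_1, …, U·m_L} (with T := 0 if ⌈2/ε⌉ > L). Then the minimum of the worst-case error functional E^{(1)} over all admissible clipping strategies equals (1/M)·(∑_{ℓ≤L} max{(U·m_ℓ − T)/2, 0} + T/ε). -/

import Mathlib

open Finset

noncomputable def kthLargest {L : ℕ} (v : Fin L → ℝ) (k : ℕ) : ℝ :=
  (((Finset.univ.val.map v).sort (· ≤ ·)).reverse).getD (k - 1) 0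

/-- An admissible clipping strategy: `0 ≤ a ℓ j ≤ b ℓ j ≤ U` for every user `ℓ`
and sample index `j`. -/
def Admissible {L : ℕ} (m : Fin L → ℕ) (U : ℝ)
    (a b : (ℓ : Fin L) → Fin (m ℓ) → ℝ) : Prop :=
  ∀ ℓ j, 0 ≤ a ℓ j ∧ a ℓ j ≤ b ℓ j ∧ b ℓ j ≤ U

/-- The worst-case error functional `E^(1)` of a clipping strategy (dimension `d = 1`). -/
noncomputable def E1 {L : ℕ} (m : Fin L → ℕ) (U ε : ℝ)
    (a b : (ℓ : Fin L) → Fin (m ℓ) → ℝ) : ℝ :=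
  (1 / ∑ ℓ, (m ℓ : ℝ)) *
    ((∑ ℓ, ∑ j, max (a ℓ j) (U - b ℓ j)) +
      (1 / ε) * sSup (Set.range fun ℓ => ∑ j, (b ℓ j - a ℓ j)))




lemma helperA (r : List ℝ) (p : ℝ → Bool) (k : ℕ) (hk : k ≤ r.length)
    (h1 : ∀ a ∈ r.take k, p a) : k ≤ r.countP p := by
  have h2 : (r.take k).filter p = r.take k := List.filter_eq_self.mpr h1
  have h3 : List.Sublist ((r.take k).filter p) (r.filter p) := (List.take_sublist _ _).filter p
  rw [h2] at h3
  have h4 := h3.length_le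
  rw [List.length_take, List.countP_eq_length_filter] at *
  omega

lemma helperB (r : List ℝ) (p : ℝ → Bool) (k : ℕ)
    (h : ∀ a ∈ r.drop k, ¬ p a) : r.countP p ≤ k := by
  calc r.countP p = (r.take k ++ r.drop k).countP p := by rw [List.take_append_drop]
    _ = (r.take k).countP p + (r.drop k).countP p := List.countP_append
    _ ≤ (r.take k).length + 0 := by
        refine Nat.add_le_add List.countP_le_length ?_
        exact Nat.le_of_eq (List.countP_eq_zero.mpr h)
    _ ≤ k := by rw [List.length_take]; omega

lemma kth_eq_zero {L : ℕ} (v : Fin L → ℝ) (k : ℕ) (h : L < k) : kthLargest v k = 0 := by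
  apply List.getD_eq_default
  simp only [List.length_reverse, Multiset.length_sort, Multiset.card_map]
  have : Multiset.card (Finset.univ.val (α := Fin L)) = L := by simp
  omega

lemma card_filter_eq_countP {L : ℕ} (v : Fin L → ℝ) (p : ℝ → Prop) [DecidablePred p] :
    (univ.filter fun ℓ => p (v ℓ)).card
      = (((Finset.univ.val.map v).sort (· ≤ ·)).reverse).countP (fun x => decide (p x)) := by
  rw [List.countP_reverse, ← Multiset.coe_countP, Multiset.sort_eq, Multiset.countP_map,
    ← Multiset.countP_eq_card_filter]
  simp [Finset.card, Finset.filter_val, Multiset.countP_eq_card_filter]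



lemma kth_spec {L : ℕ} (v : Fin L → ℝ) (k : ℕ) (hk1 : 1 ≤ k) (hkL : k ≤ L) :
    (∃ i, kthLargest v k = v i) ∧
    k ≤ (univ.filter fun ℓ => kthLargest v k ≤ v ℓ).card ∧
    (univ.filter fun ℓ => kthLargest v k < v ℓ).card ≤ k - 1 := by
  classical
  set r : List ℝ := ((Finset.univ.val.map v).sort (· ≤ ·)).reverse with hr
  have hlen : r.length = L := by
    simp only [hr, List.length_reverse, Multiset.length_sort, Multiset.card_map]
    simp
  have hsorted : r.Pairwise (· ≥ ·) := by
    rw [hr, List.pairwise_reverse]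
    exact Multiset.pairwise_sort _ (· ≤ ·)
  have hkl : k - 1 < r.length := by omega
  have hTeq : kthLargest v k = r[k-1] := by
    rw [kthLargest, ← hr, List.getD_eq_getElem?_getD, List.getElem?_eq_getElem hkl]
    rfl
  have hmono : ∀ (i j : ℕ) (hi : i < r.length) (hj : j < r.length), i ≤ j → r[j] ≤ r[i] := by
    intro i j hi hj hij
    have := hsorted.rel_get_of_le (a := ⟨i, hi⟩) (b := ⟨j, hj⟩) hij
    simpa using this
  refine ⟨?_, ?_, ?_⟩
  · have hmem : kthLargest v k ∈ r := hTeq ▸ List.getElem_mem _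
    rw [hr, List.mem_reverse, ← Multiset.mem_coe, Multiset.sort_eq, Multiset.mem_map] at hmem
    obtain ⟨i, _, hi⟩ := hmem
    exact ⟨i, hi.symm⟩
  · rw [card_filter_eq_countP v _, ← hr]
    apply helperA _ _ _ (by omega)
    intro a ha
    rw [List.mem_iff_getElem] at ha
    obtain ⟨i, hi, hia⟩ := ha
    have hi' : i < r.length := by
      have := hi; rw [List.length_take] at this; omega
    rw [List.getElem_take] at hia
    have : i ≤ k - 1 := by rw [List.length_take] at hi; omega
    subst hia
    simp only [decide_eq_true_eq, hTeq]
    exact hmono i (k-1) hi' hkl this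
  · rw [card_filter_eq_countP v _, ← hr]
    apply helperB _ _ (k-1)
    intro a ha
    rw [List.mem_iff_getElem] at ha
    obtain ⟨i, hi, hia⟩ := ha
    have hi' : (k-1) + i < r.length := by
      have := hi; rw [List.length_drop] at this; omega
    rw [List.getElem_drop] at hia
    subst hia
    simp only [decide_eq_true_eq, hTeq, not_lt]
    exact hmono (k-1) (k-1+i) hkl hi' (by omega)


lemma key_ineq {L : ℕ} (c : Fin L → ℝ)
    (ε : ℝ) (hε : 0 < ε) (k : ℕ) (hk1 : 1 ≤ k)
    (hk2 : (2:ℝ)/ε ≤ (k:ℝ)) (hk3 : (k:ℝ) - 1 ≤ 2/ε)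
    (T : ℝ) (hT0 : 0 ≤ T)
    (hge : ∀ x, 0 ≤ x → x < T → (k:ℝ) ≤ (univ.filter fun ℓ => T ≤ c ℓ).card)
    (hle : ((univ.filter fun ℓ => T < c ℓ).card : ℝ) ≤ (k:ℝ) - 1)
    (x : ℝ) (hx : 0 ≤ x) :
    (∑ ℓ, max ((c ℓ - T)/2) 0) + T/ε ≤ (∑ ℓ, max ((c ℓ - x)/2) 0) + x/ε := by
  classical
  rcases le_or_gt T x with hTx | hTx
  · have per : ∀ ℓ ∈ univ, max ((c ℓ - T)/2) 0
        ≤ max ((c ℓ - x)/2) 0 + (if T < c ℓ then (x - T)/2 else 0) := by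
      intro ℓ _
      by_cases h : T < c ℓ
      · rw [if_pos h]
        have h1 : max ((c ℓ - T)/2) 0 = (c ℓ - T)/2 := max_eq_left (by linarith)
        have h2 : (c ℓ - x)/2 ≤ max ((c ℓ - x)/2) 0 := le_max_left _ _
        linarith
      · rw [if_neg h]
        push_neg at h
        have h1 : max ((c ℓ - T)/2) 0 = 0 := max_eq_right (by linarith)
        have h2 : (0:ℝ) ≤ max ((c ℓ - x)/2) 0 := le_max_right _ _
        linarith
    have hsum := Finset.sum_le_sum per
    rw [Finset.sum_add_distrib, ← Finset.sum_filter, Finset.sum_const, nsmul_eq_mul] at hsum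
    have hcard : ((univ.filter fun ℓ => T < c ℓ).card : ℝ) * ((x - T)/2) ≤ x/ε - T/ε := by
      have h1 : ((univ.filter fun ℓ => T < c ℓ).card : ℝ) ≤ 2/ε := le_trans hle (by linarith)
      have h2 : (0:ℝ) ≤ (x - T)/2 := by linarith
      calc ((univ.filter fun ℓ => T < c ℓ).card : ℝ) * ((x - T)/2)
          ≤ (2/ε) * ((x - T)/2) := mul_le_mul_of_nonneg_right h1 h2
        _ = x/ε - T/ε := by field_simp
    linarith
  · have per : ∀ ℓ ∈ univ, max ((c ℓ - T)/2) 0 + (if T ≤ c ℓ then (T - x)/2 else 0)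
        ≤ max ((c ℓ - x)/2) 0 := by
      intro ℓ _
      by_cases h : T ≤ c ℓ
      · rw [if_pos h]
        have h1 : max ((c ℓ - T)/2) 0 = (c ℓ - T)/2 := max_eq_left (by linarith)
        have h2 : (c ℓ - x)/2 ≤ max ((c ℓ - x)/2) 0 := le_max_left _ _
        linarith
      · rw [if_neg h]
        push_neg at h
        have h1 : max ((c ℓ - T)/2) 0 = 0 := max_eq_right (by linarith)
        have h2 : (0:ℝ) ≤ max ((c ℓ - x)/2) 0 := le_max_right _ _
        linarith
    have hsum := Finset.sum_le_sum per
    rw [Finset.sum_add_distrib, ← Finset.sum_filter, Finset.sum_const, nsmul_eq_mul] at hsum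
    have hcard : T/ε - x/ε ≤ ((univ.filter fun ℓ => T ≤ c ℓ).card : ℝ) * ((T - x)/2) := by
      have h1 : (2:ℝ)/ε ≤ ((univ.filter fun ℓ => T ≤ c ℓ).card : ℝ) :=
        le_trans hk2 (hge x hx hTx)
      have h2 : (0:ℝ) ≤ (T - x)/2 := by linarith
      calc T/ε - x/ε = (2/ε) * ((T - x)/2) := by field_simp
        _ ≤ _ := mul_le_mul_of_nonneg_right h1 h2
    linarith

/-- optimal worst-case error, `d = 1`.
The minimum of `E^(1)` over all admissible clipping strategies equals
`(1/M)·(∑_ℓ max{(U m_ℓ − T)/2, 0} + T/ε)`, where `T` is the `⌈2/ε⌉`-th largest value of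
`{U·m_1, …, U·m_L}` (with `T = 0` if `⌈2/ε⌉ > L`). -/
theorem stmt2 {L : ℕ} (hL : 0 < L) (m : Fin L → ℕ) (hm : ∀ ℓ, 1 ≤ m ℓ)
    (U ε : ℝ) (hU : 0 < U) (hε : 0 < ε)
    (T : ℝ) (hT : T = kthLargest (fun ℓ => U * (m ℓ : ℝ)) ⌈(2 : ℝ) / ε⌉₊) :
    IsLeast {e : ℝ | ∃ a b, Admissible m U a b ∧ e = E1 m U ε a b}
      ((1 / ∑ ℓ, (m ℓ : ℝ)) *
        ((∑ ℓ, max ((U * (m ℓ : ℝ) - T) / 2) 0) + T / ε)) := by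
  classical
  set v : Fin L → ℝ := fun ℓ => U * (m ℓ : ℝ) with hv
  set k : ℕ := ⌈(2 : ℝ) / ε⌉₊ with hkdef
  have hε2 : (0:ℝ) < 2/ε := by positivity
  have hk1 : 1 ≤ k := Nat.ceil_pos.mpr hε2
  have hk2 : (2:ℝ)/ε ≤ (k:ℝ) := Nat.le_ceil _
  have hk3 : (k:ℝ) - 1 ≤ 2/ε := by
    have := Nat.ceil_lt_add_one hε2.le
    rw [← hkdef] at this; linarith
  have hvpos : ∀ ℓ, 0 < v ℓ := fun ℓ => by
    have : (1:ℝ) ≤ (m ℓ : ℝ) := by exact_mod_cast hm ℓ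
    simp only [hv]; nlinarith
  -- facts about T
  have hspec : k ≤ L →
      ((∃ i, T = v i) ∧ k ≤ (univ.filter fun ℓ => T ≤ v ℓ).card ∧
        (univ.filter fun ℓ => T < v ℓ).card ≤ k - 1) := by
    intro hkL
    rw [hT]
    exact kth_spec v k hk1 hkL
  have hT0 : 0 ≤ T := by
    rcases le_or_gt k L with h | h
    · obtain ⟨i, hi⟩ := (hspec h).1
      rw [hi]; exact (hvpos i).le
    · rw [hT, kth_eq_zero v k h]
  have hTle : ∃ i, T ≤ v i := by
    rcases le_or_gt k L with h | h
    · obtain ⟨i, hi⟩ := (hspec h).1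
      exact ⟨i, hi.le⟩
    · exact ⟨⟨0, hL⟩, by rw [hT, kth_eq_zero v k h]; exact (hvpos _).le⟩
  have hcard_le : ((univ.filter fun ℓ => T < v ℓ).card : ℝ) ≤ (k:ℝ) - 1 := by
    rcases le_or_gt k L with h | h
    · have h1 := (hspec h).2.2
      have : ((univ.filter fun ℓ => T < v ℓ).card : ℝ) ≤ ((k - 1 : ℕ) : ℝ) := by
        exact_mod_cast h1
      rwa [Nat.cast_sub hk1, Nat.cast_one] at this
    · have h1 : (univ.filter fun ℓ => T < v ℓ).card ≤ L := by
        calc _ ≤ univ.card := Finset.card_filter_le _ _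
          _ = L := by simp
      have : ((univ.filter fun ℓ => T < v ℓ).card : ℝ) ≤ (L:ℝ) := by exact_mod_cast h1
      have h2 : (L:ℝ) ≤ (k:ℝ) - 1 := by
        have : (L + 1 : ℕ) ≤ k := h
        have := Nat.cast_le (α := ℝ).mpr this
        push_cast at this; linarith
      linarith
  have hcard_ge : ∀ x : ℝ, 0 ≤ x → x < T → (k:ℝ) ≤ (univ.filter fun ℓ => T ≤ v ℓ).card := by
    intro x hx hxT
    rcases le_or_gt k L with h | h
    · exact_mod_cast (hspec h).2.1
    · exfalso
      rw [hT, kth_eq_zero v k h] at hxT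
      linarith
  have key := key_ineq v ε hε k hk1 hk2 hk3 T hT0 hcard_ge hcard_le
  -- M positivity
  have hM : (0:ℝ) < ∑ ℓ, (m ℓ : ℝ) := by
    apply Finset.sum_pos
    · intro ℓ _
      have : (1:ℝ) ≤ (m ℓ : ℝ) := by exact_mod_cast hm ℓ
      linarith
    · exact ⟨⟨0, hL⟩, Finset.mem_univ _⟩
  have hMinv : (0:ℝ) ≤ 1 / ∑ ℓ, (m ℓ : ℝ) := by positivity
  constructor
  · -- membership
    set w : Fin L → ℝ := fun ℓ => min (v ℓ) T / (m ℓ : ℝ) with hw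
    have hm0 : ∀ ℓ, (0:ℝ) < (m ℓ : ℝ) := fun ℓ => by
      exact_mod_cast Nat.lt_of_lt_of_le Nat.zero_lt_one (hm ℓ)
    have hw0 : ∀ ℓ, 0 ≤ w ℓ := fun ℓ => by
      apply div_nonneg _ (hm0 ℓ).le
      exact le_min (hvpos ℓ).le hT0
    have hwU : ∀ ℓ, w ℓ ≤ U := fun ℓ => by
      rw [hw, div_le_iff₀ (hm0 ℓ)]
      calc min (v ℓ) T ≤ v ℓ := min_le_left _ _
        _ = U * (m ℓ : ℝ) := rfl
    refine ⟨fun ℓ _ => (U - w ℓ)/2, fun ℓ _ => (U + w ℓ)/2, ?_, ?_⟩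
    · intro ℓ j
      refine ⟨by linarith [hw0 ℓ, hwU ℓ], by linarith [hw0 ℓ], by linarith [hwU ℓ]⟩
    · rw [E1]
      congr 1
      congr 1
      · apply Finset.sum_congr rfl
        intro ℓ _
        have h1 : ∀ j : Fin (m ℓ), max ((U - w ℓ)/2) (U - (U + w ℓ)/2) = (U - w ℓ)/2 := by
          intro j
          have : U - (U + w ℓ)/2 = (U - w ℓ)/2 := by ring
          rw [this, max_self]
        rw [Finset.sum_congr rfl (fun j _ => h1 j), Finset.sum_const, Finset.card_univ,
          Fintype.card_fin, nsmul_eq_mul]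
        have hmw : (m ℓ : ℝ) * w ℓ = min (v ℓ) T := by
          rw [hw, mul_div_cancel₀ _ (hm0 ℓ).ne']
        rcases le_total (v ℓ) T with h | h
        · rw [min_eq_left h] at hmw
          have : max ((U * (m ℓ:ℝ) - T)/2) 0 = 0 := max_eq_right (by
            simp only [hv] at h ⊢; linarith)
          rw [this]
          have : (m ℓ : ℝ) * ((U - w ℓ)/2) = ((m ℓ:ℝ) * U - (m ℓ:ℝ) * w ℓ)/2 := by ring
          rw [this, hmw]; simp only [hv]; ring
        · rw [min_eq_right h] at hmw
          have : max ((U * (m ℓ:ℝ) - T)/2) 0 = (U * (m ℓ:ℝ) - T)/2 := max_eq_left (by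
            simp only [hv] at h ⊢; linarith)
          rw [this]
          have : (m ℓ : ℝ) * ((U - w ℓ)/2) = ((m ℓ:ℝ) * U - (m ℓ:ℝ) * w ℓ)/2 := by ring
          rw [this, hmw]; ring
      · -- sup part
        have hfun : (fun ℓ => ∑ _j : Fin (m ℓ), ((U + w ℓ)/2 - (U - w ℓ)/2))
            = fun ℓ => min (v ℓ) T := by
          funext ℓ
          have : (U + w ℓ)/2 - (U - w ℓ)/2 = w ℓ := by ring
          rw [Finset.sum_congr rfl (fun j _ => this), Finset.sum_const, Finset.card_univ,
            Fintype.card_fin, nsmul_eq_mul, hw, mul_div_cancel₀ _ (hm0 ℓ).ne']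
        rw [hfun]
        have hsup : sSup (Set.range fun ℓ => min (v ℓ) T) = T := by
          apply IsGreatest.csSup_eq
          constructor
          · obtain ⟨i, hi⟩ := hTle
            exact ⟨i, min_eq_right hi⟩
          · rintro y ⟨ℓ, rfl⟩
            exact min_le_right _ _
        rw [hsup, one_div_mul_eq_div]
  · -- lower bound
    rintro e ⟨a, b, hab, rfl⟩
    rw [E1]
    apply mul_le_mul_of_nonneg_left _ hMinv
    set S : Fin L → ℝ := fun ℓ => ∑ j, (b ℓ j - a ℓ j) with hS
    have hS0 : ∀ ℓ, 0 ≤ S ℓ := fun ℓ =>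
      Finset.sum_nonneg fun j _ => by linarith [(hab ℓ j).2.1]
    have hSc : ∀ ℓ, S ℓ ≤ v ℓ := fun ℓ => by
      rw [hS]
      calc ∑ j, (b ℓ j - a ℓ j) ≤ ∑ _j : Fin (m ℓ), U :=
            Finset.sum_le_sum fun j _ => by linarith [(hab ℓ j).1, (hab ℓ j).2.2]
        _ = v ℓ := by
            rw [Finset.sum_const, Finset.card_univ, Fintype.card_fin, nsmul_eq_mul, hv]
            ring
    have hbdd : BddAbove (Set.range S) := (Set.finite_range S).bddAbove
    set Ssup : ℝ := sSup (Set.range S) with hSs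
    have hSsub : ∀ ℓ, S ℓ ≤ Ssup := fun ℓ => le_csSup hbdd ⟨ℓ, rfl⟩
    have hSub0 : 0 ≤ Ssup := le_trans (hS0 ⟨0, hL⟩) (hSsub _)
    have inner : ∀ ℓ ∈ univ, max ((v ℓ - Ssup)/2) 0 ≤ ∑ j, max (a ℓ j) (U - b ℓ j) := by
      intro ℓ _
      have h1 : ∑ j, (a ℓ j + (U - b ℓ j))/2 ≤ ∑ j, max (a ℓ j) (U - b ℓ j) := by
        apply Finset.sum_le_sum
        intro j _
        rcases le_total (a ℓ j) (U - b ℓ j) with h | h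
        · have := le_max_right (a ℓ j) (U - b ℓ j); linarith
        · have := le_max_left (a ℓ j) (U - b ℓ j); linarith
      have h2 : ∑ j, (a ℓ j + (U - b ℓ j))/2 = (v ℓ - S ℓ)/2 := by
        have : ∀ j : Fin (m ℓ), (a ℓ j + (U - b ℓ j))/2 = (U - (b ℓ j - a ℓ j))/2 := by
          intro j; ring
        rw [Finset.sum_congr rfl fun j _ => this j]
        rw [← Finset.sum_div]
        rw [Finset.sum_sub_distrib, Finset.sum_const, Finset.card_univ, Fintype.card_fin,
          nsmul_eq_mul]
        simp only [hv, hS]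
        ring
      have h3 : max ((v ℓ - Ssup)/2) 0 ≤ (v ℓ - S ℓ)/2 := by
        apply max_le
        · have := hSsub ℓ; linarith
        · have := hSc ℓ; linarith
      rw [h2] at h1
      linarith
    have hsum := Finset.sum_le_sum inner
    have hkey := key Ssup hSub0
    have : (1/ε) * Ssup = Ssup/ε := one_div_mul_eq_div _ _
    simp only [hv] at hsum hkey ⊢
    linarith
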